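/- Let Δ : ℕ^(2) → ℕ be an infinite colouring (i.e., the image of Δ is infinite) and let n ≥ 2 be a natural number. Then |G_Δ ∩ [n(n-1)/2]| ≥ n − 1. -/

import Mathlib

/-- The colour of the unordered edge `{x, y}` (only values on distinct pairs matter). -/
def edgeCol (Δ : ℕ → ℕ → ℕ) (x y : ℕ) : ℕ := Δ (min x y) (max x y)

/-- `colourSet Δ X` is the set of colours attained by `Δ` on edges with both endpoints in `X`. -/
def colourSet (Δ : ℕ → ℕ → ℕ) (X : Set ℕ) : Set ℕ :=
  {c | ∃ x ∈ X, ∃ y ∈ X, x ≠ y ∧ edgeCol Δ x y = c}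

/-- `G_Δ`: the set of `m ≥ 1` for which some (finite or infinite) `X ⊆ ℕ` is
exactly `m`-coloured. -/
def GSet (Δ : ℕ → ℕ → ℕ) : Set ℕ :=
  {m | 1 ≤ m ∧ ∃ X : Set ℕ, (colourSet Δ X).Finite ∧ (colourSet Δ X).ncard = m}

/-- Finset of colours on a finite vertex set. -/
def CF (Δ : ℕ → ℕ → ℕ) (X : Finset ℕ) : Finset ℕ :=
  ((X ×ˢ X).filter (fun p => p.1 < p.2)).image (fun p => Δ p.1 p.2)

lemma coe_CF (Δ : ℕ → ℕ → ℕ) (X : Finset ℕ) : (CF Δ X : Set ℕ) = colourSet Δ ↑X := by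
  ext c
  simp only [CF, colourSet, Finset.coe_image, Set.mem_image, Finset.mem_coe,
    Finset.mem_filter, Finset.mem_product, Set.mem_setOf_eq]
  constructor
  · rintro ⟨⟨a, b⟩, ⟨⟨ha, hb⟩, hab⟩, rfl⟩
    exact ⟨a, ha, b, hb, hab.ne, by
      simp [edgeCol, min_eq_left hab.le, max_eq_right hab.le]⟩
  · rintro ⟨x, hx, y, hy, hxy, rfl⟩
    rcases lt_or_gt_of_ne hxy with h | h
    · exact ⟨(x, y), ⟨⟨hx, hy⟩, h⟩, by
        simp [edgeCol, min_eq_left h.le, max_eq_right h.le]⟩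
    · exact ⟨(y, x), ⟨⟨hy, hx⟩, h⟩, by
        simp [edgeCol, min_eq_right h.le, max_eq_left h.le]⟩

lemma ncard_colourSet (Δ : ℕ → ℕ → ℕ) (X : Finset ℕ) :
    (colourSet Δ ↑X).ncard = (CF Δ X).card := by
  rw [← coe_CF, Set.ncard_coe_finset]

lemma colourSet_finite (Δ : ℕ → ℕ → ℕ) (X : Finset ℕ) : (colourSet Δ ↑X).Finite := by
  rw [← coe_CF]; exact (CF Δ X).finite_toSet

lemma CF_mono (Δ : ℕ → ℕ → ℕ) {X Y : Finset ℕ} (h : X ⊆ Y) : CF Δ X ⊆ CF Δ Y := by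
  apply Finset.image_subset_image
  exact Finset.filter_subset_filter _ (Finset.product_subset_product h h)

lemma CF_card_le (Δ : ℕ → ℕ → ℕ) (X : Finset ℕ) :
    (CF Δ X).card ≤ X.card.choose 2 := by
  refine le_trans (Finset.card_image_le) ?_
  rw [← Finset.card_powersetCard 2 X]
  apply Finset.card_le_card_of_injOn (fun p => {p.1, p.2})
  · rintro ⟨a, b⟩ hp
    simp only [Finset.coe_filter, Finset.mem_coe, Set.mem_setOf_eq, Finset.mem_filter, Finset.mem_product] at hp ⊢
    obtain ⟨⟨ha, hb⟩, hab⟩ := hp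
    rw [Finset.mem_powersetCard]
    constructor
    · intro x hx
      simp only [Finset.mem_insert, Finset.mem_singleton] at hx
      rcases hx with rfl | rfl <;> assumption
    · rw [Finset.card_insert_of_notMem (by simp [hab.ne]), Finset.card_singleton]
  · rintro ⟨a, b⟩ hp ⟨c, d⟩ hq h
    simp only [Finset.coe_filter, Set.mem_setOf_eq, Finset.mem_product] at hp hq
    simp only at h
    have h1 : a ∈ ({c, d} : Finset ℕ) := by rw [← h]; simp
    have h2 : b ∈ ({c, d} : Finset ℕ) := by rw [← h]; simp
    have h3 : c ∈ ({a, b} : Finset ℕ) := by rw [h]; simp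
    have h4 : d ∈ ({a, b} : Finset ℕ) := by rw [h]; simp
    simp only [Finset.mem_insert, Finset.mem_singleton] at h1 h2 h3 h4
    have := hp.2; have := hq.2
    refine Prod.ext ?_ ?_ <;> dsimp <;> omega

lemma card_CF_mem_GSet (Δ : ℕ → ℕ → ℕ) (X : Finset ℕ) (h : 1 ≤ (CF Δ X).card) :
    (CF Δ X).card ∈ GSet Δ :=
  ⟨h, ↑X, colourSet_finite Δ X, ncard_colourSet Δ X⟩

lemma mem_CF_of (Δ : ℕ → ℕ → ℕ) {X : Finset ℕ} {x y : ℕ} (hxy : x ≠ y)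
    (hx : x ∈ X) (hy : y ∈ X) : edgeCol Δ x y ∈ CF Δ X := by
  have : edgeCol Δ x y ∈ colourSet Δ ↑X := ⟨x, hx, y, hy, hxy, rfl⟩
  rwa [← coe_CF, Finset.mem_coe] at this

lemma exists_CF_superset (Δ : ℕ → ℕ → ℕ) (S : Finset ℕ)
    (hS : ↑S ⊆ colourSet Δ Set.univ) : ∃ X : Finset ℕ, S ⊆ CF Δ X := by
  induction S using Finset.induction_on with
  | empty => exact ⟨∅, Finset.empty_subset _⟩
  | @insert c S hc ih =>
    obtain ⟨X, hX⟩ := ih (fun a ha => hS (by simp [Finset.mem_coe.mp ha]))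
    have hcmem : c ∈ colourSet Δ Set.univ := hS (by simp)
    obtain ⟨x, -, y, -, hxy, hcol⟩ := hcmem
    refine ⟨insert x (insert y X), ?_⟩
    intro a ha
    rcases Finset.mem_insert.mp ha with rfl | haS
    · rw [← hcol]
      exact mem_CF_of Δ hxy (by simp) (by simp)
    · exact CF_mono Δ (by intro z hz; simp [hz]) (hX haS)

lemma exists_CF_card_ge (Δ : ℕ → ℕ → ℕ) (hΔ : (colourSet Δ Set.univ).Infinite)
    (k : ℕ) : ∃ X : Finset ℕ, k ≤ (CF Δ X).card := by
  obtain ⟨S, hSsub, hScard⟩ := hΔ.exists_subset_card_eq k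
  obtain ⟨X, hX⟩ := exists_CF_superset Δ S hSsub
  exact ⟨X, hScard ▸ Finset.card_le_card hX⟩

lemma double_count (Δ : ℕ → ℕ → ℕ) (X : Finset ℕ) :
    (X.card - 2) * (CF Δ X).card ≤ ∑ v ∈ X, (CF Δ (X.erase v)).card := by
  have step1 : ∀ v ∈ X, (CF Δ (X.erase v)).card =
      ((CF Δ X).filter (fun c => c ∈ CF Δ (X.erase v))).card := by
    intro v _
    congr 1
    rw [Finset.filter_mem_eq_inter]
    exact (Finset.inter_eq_right.mpr (CF_mono Δ (Finset.erase_subset v X))).symm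
  calc (X.card - 2) * (CF Δ X).card
      = ∑ _c ∈ CF Δ X, (X.card - 2) := by rw [Finset.sum_const, smul_eq_mul, mul_comm]
    _ ≤ ∑ c ∈ CF Δ X, (X.filter (fun v => c ∈ CF Δ (X.erase v))).card := by
        apply Finset.sum_le_sum
        intro c hc
        simp only [CF, Finset.mem_image, Finset.mem_filter, Finset.mem_product] at hc
        obtain ⟨⟨a, b⟩, ⟨⟨ha, hb⟩, hab⟩, rfl⟩ := hc
        dsimp only
        have hsub : (X.erase a).erase b ⊆ X.filter (fun v => Δ a b ∈ CF Δ (X.erase v)) := by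
          intro v hv
          simp only [Finset.mem_erase] at hv
          obtain ⟨hvb, hva, hvX⟩ := hv
          rw [Finset.mem_filter]
          refine ⟨hvX, ?_⟩
          have : edgeCol Δ a b = Δ a b := by
            simp [edgeCol, min_eq_left hab.le, max_eq_right hab.le]
          rw [← this]
          exact mem_CF_of Δ hab.ne (Finset.mem_erase.mpr ⟨(Ne.symm hva), ha⟩)
            (Finset.mem_erase.mpr ⟨(Ne.symm hvb), hb⟩)
        have hcard := Finset.card_le_card hsub
        rw [Finset.card_erase_of_mem (Finset.mem_erase.mpr ⟨hab.ne', hb⟩),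
          Finset.card_erase_of_mem ha] at hcard
        omega
    _ = ∑ c ∈ CF Δ X, ∑ v ∈ X, (if c ∈ CF Δ (X.erase v) then 1 else 0) := by
        apply Finset.sum_congr rfl
        intro c _
        rw [Finset.card_filter]
    _ = ∑ v ∈ X, ∑ c ∈ CF Δ X, (if c ∈ CF Δ (X.erase v) then 1 else 0) := Finset.sum_comm
    _ = ∑ v ∈ X, (CF Δ (X.erase v)).card := by
        apply Finset.sum_congr rfl
        intro v hv
        rw [step1 v hv, Finset.card_filter]

lemma key_lemma (Δ : ℕ → ℕ → ℕ) (hΔ : (colourSet Δ Set.univ).Infinite)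
    (j : ℕ) (hj : 2 ≤ j) :
    ∃ m, m ∈ GSet Δ ∧ (j-1)*(j-2)/2 < m ∧ m ≤ j*(j-1)/2 := by
  classical
  set A := (j-1)*(j-2)/2 with hA
  set k := A + 1 with hk
  have hP : ∃ s, ∃ X : Finset ℕ, X.card = s ∧ k ≤ (CF Δ X).card := by
    obtain ⟨X, hX⟩ := exists_CF_card_ge Δ hΔ k
    exact ⟨X.card, X, rfl, hX⟩
  obtain ⟨X, hXcard, hXk⟩ := Nat.find_spec hP
  set m := (CF Δ X).card with hm
  have hmin : ∀ v ∈ X, (CF Δ (X.erase v)).card ≤ A := by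
    intro v hv
    by_contra hcon
    push_neg at hcon
    have hPs : ∃ X' : Finset ℕ, X'.card = X.card - 1 ∧ k ≤ (CF Δ X').card :=
      ⟨X.erase v, Finset.card_erase_of_mem hv, hcon⟩
    have hlt : X.card - 1 < Nat.find hP := by
      have h1 : 1 ≤ X.card := Finset.card_pos.mpr ⟨v, hv⟩
      omega
    exact Nat.find_min hP hlt hPs
  have hm1 : 1 ≤ m := le_trans (by omega) hXk
  refine ⟨m, card_CF_mem_GSet Δ X hm1, by omega, ?_⟩
  -- upper bound
  have hms : m ≤ X.card.choose 2 := CF_card_le Δ X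
  have h2A : 2 * A = (j-1)*(j-2) := by
    rw [hA]
    refine Nat.mul_div_cancel' ?_
    obtain ⟨i, rfl⟩ : ∃ i, j = i + 2 := ⟨j - 2, by omega⟩
    simp only [Nat.add_sub_cancel]
    have : i + 2 - 1 = i + 1 := by omega
    rw [this]
    rcases Nat.even_or_odd i with he | ho
    · exact Dvd.dvd.mul_left he.two_dvd _
    · exact Dvd.dvd.mul_right (by obtain ⟨c, rfl⟩ := ho; omega : 2 ∣ i + 1) _
  have hgoal2 : m * 2 ≤ j * (j-1) → m ≤ j*(j-1)/2 := by
    intro h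
    exact (Nat.le_div_iff_mul_le (by norm_num)).mpr h
  apply hgoal2
  by_cases hs3 : X.card ≤ 2
  · have h1 : X.card.choose 2 ≤ 1 := by interval_cases h : X.card <;> simp
    have h2j : 2 ≤ j * (j - 1) := le_trans (by omega) (Nat.mul_le_mul_right (j-1) hj)
    omega
  · push_neg at hs3
    -- X.card ≥ 3 ; first, X.card ≥ j
    have hsj : j ≤ X.card := by
      by_contra hcon
      push_neg at hcon
      have : X.card.choose 2 ≤ (j-1).choose 2 :=
        Nat.choose_le_choose 2 (by omega)
      simp only [Nat.choose_two_right] at this hms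
      have he : (j-1) - 1 = j - 2 := by omega
      rw [he] at this
      omega
    have hdc := double_count Δ X
    have hsum : ∑ v ∈ X, (CF Δ (X.erase v)).card ≤ X.card * A := by
      calc ∑ v ∈ X, (CF Δ (X.erase v)).card ≤ ∑ _v ∈ X, A := Finset.sum_le_sum hmin
        _ = X.card * A := by rw [Finset.sum_const, smul_eq_mul]
    have hkey : (X.card - 2) * m ≤ X.card * A := le_trans hdc hsum
    obtain ⟨i, rfl⟩ : ∃ i, j = i + 2 := ⟨j - 2, by omega⟩
    obtain ⟨t, hst⟩ : ∃ t, X.card = t + 2 := ⟨X.card - 2, by omega⟩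
    have hit : i ≤ t := by omega
    rw [hst] at hkey
    simp only [Nat.add_sub_cancel] at hkey h2A ⊢
    have hj1 : i + 2 - 1 = i + 1 := by omega
    rw [hj1] at h2A ⊢
    -- hkey : t * m ≤ (t+2) * A, h2A : 2*A = (i+1)*i, goal : m * 2 ≤ (i+2)*(i+1)
    have ht1 : 1 ≤ t := by omega
    have h1 : t * (m * 2) ≤ (t+2) * ((i+1)*i) := by nlinarith
    have h2 : (t+2) * ((i+1)*i) ≤ t * ((i+2)*(i+1)) := by nlinarith
    exact Nat.le_of_mul_le_mul_left (le_trans h1 h2) (by omega)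

lemma tri_mono : ∀ {a b : ℕ}, a ≤ b → a*(a-1)/2 ≤ b*(b-1)/2 := by
  intro a b h
  exact Nat.div_le_div_right (Nat.mul_le_mul h (by omega))


/-- **Theorem 3.** For every infinite colouring `Δ : ℕ^(2) → ℕ` and every `n ≥ 2`,
`|G_Δ ∩ [n(n-1)/2]| ≥ n - 1`. -/
theorem GSet_inter_lower_bound (Δ : ℕ → ℕ → ℕ)
    (hΔ : (colourSet Δ Set.univ).Infinite) (n : ℕ) (hn : 2 ≤ n) :
    n - 1 ≤ (GSet Δ ∩ Set.Icc 1 (n * (n - 1) / 2)).ncard := by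
  classical
  set N := n * (n - 1) / 2 with hN
  set f : ℕ → ℕ := fun j => if h : 2 ≤ j then (key_lemma Δ hΔ j h).choose else 0 with hf
  have hprop : ∀ j, 2 ≤ j → f j ∈ GSet Δ ∧ (j-1)*(j-2)/2 < f j ∧ f j ≤ j*(j-1)/2 := by
    intro j hj
    have := (key_lemma Δ hΔ j hj).choose_spec
    simpa [hf, dif_pos hj] using this
  have hSfin : (GSet Δ ∩ Set.Icc 1 N).Finite :=
    Set.Finite.inter_of_right (Set.finite_Icc 1 N) _
  have hsub : ↑((Finset.Icc 2 n).image f) ⊆ GSet Δ ∩ Set.Icc 1 N := by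
    intro m hm
    simp only [Finset.coe_image, Set.mem_image, Finset.mem_coe, Finset.mem_Icc] at hm
    obtain ⟨j, ⟨hj2, hjn⟩, rfl⟩ := hm
    obtain ⟨hG, hlow, hup⟩ := hprop j hj2
    refine ⟨hG, hG.1, le_trans hup (tri_mono hjn)⟩
  have key : ∀ a b : ℕ, 2 ≤ a → a < b → f a ≠ f b := by
    intro a b ha2 hlt
    obtain ⟨-, -, hupa⟩ := hprop a ha2
    obtain ⟨-, hlowb, -⟩ := hprop b (by omega)
    have h1 : a*(a-1)/2 ≤ (b-1)*((b-1)-1)/2 := tri_mono (by omega)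
    have h2 : (b-1)-1 = b-2 := by omega
    rw [h2] at h1
    omega
  have hinj : Set.InjOn f ↑(Finset.Icc 2 n) := by
    intro a ha b hb hab
    simp only [Finset.coe_Icc, Set.mem_Icc] at ha hb
    by_contra hne
    rcases Ne.lt_or_gt hne with hlt | hlt
    · exact key a b ha.1 hlt hab
    · exact key b a hb.1 hlt hab.symm
  have hcard : ((Finset.Icc 2 n).image f).card = n - 1 := by
    rw [Finset.card_image_of_injOn hinj, Nat.card_Icc]
    omega
  calc n - 1 = ((Finset.Icc 2 n).image f).card := hcard.symm
    _ = (↑((Finset.Icc 2 n).image f) : Set ℕ).ncard := (Set.ncard_coe_finset _).symm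
    _ ≤ (GSet Δ ∩ Set.Icc 1 N).ncard := Set.ncard_le_ncard hsub hSfin
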